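/- For an odd prime p, sum_{i=0}^{p-1} p*(-1)^i/(2i-1) ≡ -2p + (-1)^((p+1)/2) + (1/2)*sum_{k=1}^{(p-3)/2} (-1)^((p-1)/2 + k) * p^2/k^2 (mod p^3). -/

import Mathlib

open Finset

def Pint (p : ℕ) (q : ℚ) : Prop := ∃ a b : ℤ, b ≠ 0 ∧ ¬ (p:ℤ) ∣ b ∧ q * b = a

lemma Pint.zero {p : ℕ} (hp : p.Prime) : Pint p 0 := by
  refine ⟨0, 1, one_ne_zero, ?_, by simp⟩
  intro h
  have h1 : (p:ℤ) = 1 := Int.eq_one_of_dvd_one (by positivity) h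
  have : p = 1 := by exact_mod_cast h1
  exact hp.one_lt.ne' this

lemma Pint.add {p : ℕ} (hp : p.Prime) {x y : ℚ} (hx : Pint p x) (hy : Pint p y) :
    Pint p (x + y) := by
  obtain ⟨a, b, hb0, hbp, hab⟩ := hx
  obtain ⟨c, d, hd0, hdp, hcd⟩ := hy
  refine ⟨a * d + c * b, b * d, mul_ne_zero hb0 hd0, ?_, ?_⟩
  · intro h
    rcases (Int.Prime.dvd_mul' (by exact_mod_cast hp) h) with h | h
    · exact hbp h
    · exact hdp h
  · push_cast [← hab, ← hcd]; ring

lemma Pint.sum {p : ℕ} (hp : p.Prime) {ι : Type*} (s : Finset ι) (f : ι → ℚ)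
    (h : ∀ i ∈ s, Pint p (f i)) : Pint p (∑ i ∈ s, f i) :=
  Finset.sum_induction f (Pint p) (fun _ _ => Pint.add hp) (Pint.zero hp) h

lemma Pint.div {p : ℕ} (c : ℤ) (d : ℕ) (hd : d ≠ 0) (hdp : ¬ p ∣ d) :
    Pint p ((c:ℚ) / (d:ℚ)) := by
  refine ⟨c, d, by exact_mod_cast hd, by exact_mod_cast hdp, ?_⟩
  field_simp
  norm_cast

lemma sign_eq {a b : ℕ} (h : a % 2 = b % 2) : ((-1:ℚ))^a = (-1)^b := by
  rw [neg_one_pow_eq_pow_mod_two, h, ← neg_one_pow_eq_pow_mod_two]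

lemma not_dvd_of_lt {p m : ℕ} (h0 : 0 < m) (h1 : m < p) : ¬ p ∣ m :=
  fun h => absurd (Nat.le_of_dvd h0 h) (by omega)

lemma not_dvd_of_between {p m : ℕ} (h0 : p < m) (h1 : m < 2*p) : ¬ p ∣ m := by
  intro h; obtain ⟨k, hk⟩ := h
  have h2 : 2 ≤ k := by rcases k with _|_|k <;> omega
  have : p*2 ≤ p*k := Nat.mul_le_mul_left p h2
  omega

theorem stmt_14 (p : ℕ) (hp : p.Prime) (hodd : Odd p) :
    ∃ a b : ℤ, b ≠ 0 ∧ ¬ (p : ℤ) ∣ b ∧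
      ((∑ i ∈ Finset.range p, (p : ℚ) * (-1) ^ i / (2 * (i : ℚ) - 1)) -
          (-2 * (p : ℚ) + (-1) ^ ((p + 1) / 2) +
            (1 / 2) * ∑ k ∈ Finset.Icc 1 ((p - 3) / 2),
              (-1) ^ ((p - 1) / 2 + k) * (p : ℚ) ^ 2 / (k : ℚ) ^ 2)) * (b : ℚ) =
        (p : ℚ) ^ 3 * (a : ℚ) := by
  obtain ⟨n, hn⟩ := hodd
  have hp2 := hp.two_le
  have hn1 : 1 ≤ n := by omega
  have hpq : (p:ℚ) = 2*(n:ℚ)+1 := by rw [hn]; push_cast; ring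
  have e1 : (p+1)/2 = n+1 := by omega
  have e2 : (p-3)/2 = n-1 := by omega
  have e3 : (p-1)/2 = n := by omega
  rw [e1, e2]
  simp only [e3]
  -- step 1 : split the range sum
  have hA : (∑ i ∈ Finset.range p, (p : ℚ) * (-1) ^ i / (2 * (i : ℚ) - 1))
      = -2*(p:ℚ) + (-1)^(n+1)
        + ∑ i ∈ Icc 2 n, ((p:ℚ) * (-1)^i / (2*(i:ℚ)-1)
            + (p:ℚ) * (-1)^(2*n+2-i) / (2*((2*n+2-i : ℕ):ℚ)-1)) := by
    have hd1 : Disjoint (Icc 2 n) (Icc (n+2) (2*n)) := by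
      rw [Finset.disjoint_left]; intro x hx hx'
      simp only [Finset.mem_Icc] at hx hx'; omega
    have hd2 : Disjoint ((Icc 2 n) ∪ (Icc (n+2) (2*n))) ({0, 1, n+1} : Finset ℕ) := by
      rw [Finset.disjoint_left]; intro x hx hx'
      simp only [Finset.mem_union, Finset.mem_Icc, Finset.mem_insert,
        Finset.mem_singleton] at hx hx'; omega
    have hset : Finset.range p = ((Icc 2 n) ∪ (Icc (n+2) (2*n))) ∪ ({0, 1, n+1} : Finset ℕ) := by
      ext x
      simp only [Finset.mem_range, Finset.mem_union, Finset.mem_Icc, Finset.mem_insert,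
        Finset.mem_singleton]
      omega
    have hswap : ∑ i ∈ Icc (n+2) (2*n), (p : ℚ) * (-1) ^ i / (2 * (i : ℚ) - 1)
        = ∑ i ∈ Icc 2 n, (p:ℚ) * (-1)^(2*n+2-i) / (2*((2*n+2-i : ℕ):ℚ)-1) := by
      refine Finset.sum_nbij' (fun i => 2*n+2-i) (fun i => 2*n+2-i) ?_ ?_ ?_ ?_ ?_
      · intro a ha; simp only [Finset.mem_Icc] at *; omega
      · intro a ha; simp only [Finset.mem_Icc] at *; omega
      · intro a ha; simp only [Finset.mem_Icc] at *; omega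
      · intro a ha; simp only [Finset.mem_Icc] at *; omega
      · intro a ha; simp only [Finset.mem_Icc] at ha
        have : 2*n+2-(2*n+2-a) = a := by omega
        rw [this]
    have h013 : ∑ i ∈ ({0, 1, n+1} : Finset ℕ), (p : ℚ) * (-1) ^ i / (2 * (i : ℚ) - 1)
        = -2*(p:ℚ) + (-1)^(n+1) := by
      rw [show ({0, 1, n+1} : Finset ℕ) = insert 0 (insert 1 ({n+1} : Finset ℕ)) from rfl]
      rw [Finset.sum_insert (by simp), Finset.sum_insert (by simp; omega),
        Finset.sum_singleton]
      have hne : 2*(n:ℚ)+1 ≠ 0 := by positivity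
      rw [hpq]; push_cast
      have h : (2*(n:ℚ)+1) * (-1)^(n+1) / (2*((n:ℚ)+1)-1) = (-1)^(n+1) := by
        rw [show 2*((n:ℚ)+1)-1 = 2*(n:ℚ)+1 by ring]
        field_simp
      rw [h]
      ring
    rw [hset, Finset.sum_union hd2, Finset.sum_union hd1, hswap, h013,
      ← Finset.sum_add_distrib]
    ring
  -- step 2 : pairwise identity
  have hpair : ∀ i ∈ Icc 2 n, ((p:ℚ) * (-1)^i / (2*(i:ℚ)-1)
        + (p:ℚ) * (-1)^(2*n+2-i) / (2*((2*n+2-i : ℕ):ℚ)-1))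
      = -2*(p:ℚ)^2*(-1)^i/(2*(i:ℚ)-1)^2
        + (p:ℚ)^3 * (4*(-1)^i/((2*(i:ℚ)-1)^2*(2*(p:ℚ)-(2*(i:ℚ)-1)))) := by
    intro i hi
    simp only [Finset.mem_Icc] at hi
    have hi2 : (2:ℚ) ≤ (i:ℚ) := by exact_mod_cast hi.1
    have hin : (i:ℚ) ≤ (n:ℚ) := by exact_mod_cast hi.2
    have hcast : ((2*n+2-i:ℕ):ℚ) = 2*(n:ℚ)+2-(i:ℚ) := by
      have h : i ≤ 2*n+2 := by omega
      push_cast [h]; ring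
    have hsign : ((-1:ℚ))^(2*n+2-i) = (-1)^i := sign_eq (by omega)
    rw [hcast, hsign, hpq]
    have h1 : 2*(i:ℚ)-1 ≠ 0 := by intro h; nlinarith
    have h2 : 2*(2*(n:ℚ)+2-(i:ℚ))-1 ≠ 0 := by intro h; nlinarith
    have h3 : 2*(2*(n:ℚ)+1)-(2*(i:ℚ)-1) ≠ 0 := by intro h; nlinarith
    rw [show 2*(2*(n:ℚ)+2-(i:ℚ))-1 = 2*(2*(n:ℚ)+1)-(2*(i:ℚ)-1) by ring]
    field_simp
    ring
  have hB : ∑ i ∈ Icc 2 n, ((p:ℚ) * (-1)^i / (2*(i:ℚ)-1)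
        + (p:ℚ) * (-1)^(2*n+2-i) / (2*((2*n+2-i : ℕ):ℚ)-1))
      = (∑ i ∈ Icc 2 n, -2*(p:ℚ)^2*(-1)^i/(2*(i:ℚ)-1)^2)
        + (p:ℚ)^3 * ∑ i ∈ Icc 2 n, 4*(-1:ℚ)^i/((2*(i:ℚ)-1)^2*(2*(p:ℚ)-(2*(i:ℚ)-1))) := by
    rw [Finset.sum_congr rfl hpair, Finset.sum_add_distrib, Finset.mul_sum]
  -- step 3 : reindex j = n+1-i
  have hG : (∑ i ∈ Icc 2 n, -2*(p:ℚ)^2*(-1)^i/(2*(i:ℚ)-1)^2)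
      = ∑ j ∈ Icc 1 (n-1), 2*(p:ℚ)^2*(-1:ℚ)^(n+j)/((p:ℚ)-2*(j:ℚ))^2 := by
    refine Finset.sum_nbij' (fun i => n+1-i) (fun j => n+1-j) ?_ ?_ ?_ ?_ ?_
    · intro a ha; simp only [Finset.mem_Icc] at *; omega
    · intro a ha; simp only [Finset.mem_Icc] at *; omega
    · intro a ha; simp only [Finset.mem_Icc] at *; omega
    · intro a ha; simp only [Finset.mem_Icc] at *; omega
    · intro a ha; simp only [Finset.mem_Icc] at ha
      have hcast : ((n+1-a:ℕ):ℚ) = (n:ℚ)+1-(a:ℚ) := by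
        have h : a ≤ n+1 := by omega
        push_cast [h]; ring
      have hsign : ((-1:ℚ))^(n+(n+1-a)) = (-1)^(a+1) := sign_eq (by omega)
      rw [hcast, hsign, hpq, pow_succ]
      ring
  -- step 4 : per-term identity for the reindexed part vs RHS sum
  have hW : ∑ j ∈ Icc 1 (n-1), 2*(p:ℚ)^2*(-1:ℚ)^(n+j)/((p:ℚ)-2*(j:ℚ))^2
      = ∑ j ∈ Icc 1 (n-1), ((1/2)*((-1:ℚ)^(n+j)*(p:ℚ)^2/(j:ℚ)^2)
          + (p:ℚ)^3 * ((-1:ℚ)^(n+j)*(4*(j:ℚ)-(p:ℚ))/(2*(j:ℚ)^2*((p:ℚ)-2*(j:ℚ))^2))) := by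
    refine Finset.sum_congr rfl ?_
    intro j hj
    simp only [Finset.mem_Icc] at hj
    have hj1 : (1:ℚ) ≤ (j:ℚ) := by exact_mod_cast hj.1
    have hjn : (j:ℚ) ≤ ((n-1:ℕ):ℚ) := by exact_mod_cast hj.2
    have hjn' : (j:ℚ) ≤ (n:ℚ)-1 := by
      have h : ((n-1:ℕ):ℚ) = (n:ℚ)-1 := by push_cast [hn1]; ring
      linarith [h ▸ hjn]
    rw [hpq]
    have h1 : (j:ℚ) ≠ 0 := by intro h; nlinarith
    have h2 : 2*(n:ℚ)+1-2*(j:ℚ) ≠ 0 := by intro h; nlinarith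
    field_simp
    ring
  have hW2 : ∑ j ∈ Icc 1 (n-1), ((1/2)*((-1:ℚ)^(n+j)*(p:ℚ)^2/(j:ℚ)^2)
          + (p:ℚ)^3 * ((-1:ℚ)^(n+j)*(4*(j:ℚ)-(p:ℚ))/(2*(j:ℚ)^2*((p:ℚ)-2*(j:ℚ))^2)))
      = (1/2) * (∑ k ∈ Icc 1 (n-1), (-1:ℚ)^(n+k)*(p:ℚ)^2/(k:ℚ)^2)
        + (p:ℚ)^3 * ∑ j ∈ Icc 1 (n-1),
            (-1:ℚ)^(n+j)*(4*(j:ℚ)-(p:ℚ))/(2*(j:ℚ)^2*((p:ℚ)-2*(j:ℚ))^2) := by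
    rw [Finset.sum_add_distrib, Finset.mul_sum, Finset.mul_sum]
  -- step 5 : p-integrality
  have hPU : Pint p (∑ i ∈ Icc 2 n, 4*(-1:ℚ)^i/((2*(i:ℚ)-1)^2*(2*(p:ℚ)-(2*(i:ℚ)-1)))) := by
    refine Pint.sum hp _ _ ?_
    intro i hi
    simp only [Finset.mem_Icc] at hi
    have key : 4*(-1:ℚ)^i/((2*(i:ℚ)-1)^2*(2*(p:ℚ)-(2*(i:ℚ)-1)))
        = (((4*(-1)^i : ℤ)):ℚ) / ((((2*i-1)^2*(2*p-(2*i-1)) : ℕ)):ℚ) := by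
      have h1 : 1 ≤ 2*i := by omega
      have h2 : 2*i-1 ≤ 2*p := by omega
      push_cast [h1, h2]
      ring
    rw [key]
    refine Pint.div _ _ ?_ ?_
    · have c1 : 0 < 2*i-1 := by omega
      have c2 : 0 < 2*p-(2*i-1) := by omega
      exact Nat.mul_ne_zero (pow_ne_zero _ (by omega)) (by omega)
    · intro h
      rcases (Nat.Prime.dvd_mul hp).mp h with h | h
      · exact not_dvd_of_lt (by omega) (by omega) (hp.dvd_of_dvd_pow h)
      · exact not_dvd_of_between (by omega) (by omega) h
  have hPV : Pint p (∑ j ∈ Icc 1 (n-1),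
      (-1:ℚ)^(n+j)*(4*(j:ℚ)-(p:ℚ))/(2*(j:ℚ)^2*((p:ℚ)-2*(j:ℚ))^2)) := by
    refine Pint.sum hp _ _ ?_
    intro j hj
    simp only [Finset.mem_Icc] at hj
    have hjn : j ≤ n-1 := hj.2
    have key : (-1:ℚ)^(n+j)*(4*(j:ℚ)-(p:ℚ))/(2*(j:ℚ)^2*((p:ℚ)-2*(j:ℚ))^2)
        = ((((-1)^(n+j)*(4*(j:ℤ)-(p:ℤ)) : ℤ)):ℚ) / ((((2*j^2*(p-2*j)^2) : ℕ)):ℚ) := by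
      have h1 : 2*j ≤ p := by omega
      push_cast [h1]
      ring
    rw [key]
    refine Pint.div _ _ ?_ ?_
    · exact Nat.mul_ne_zero (Nat.mul_ne_zero (by omega) (pow_ne_zero _ (by omega)))
        (pow_ne_zero _ (by omega))
    · intro h
      rcases (Nat.Prime.dvd_mul hp).mp h with h | h
      · rcases (Nat.Prime.dvd_mul hp).mp h with h | h
        · exact not_dvd_of_lt (by omega) (by omega) h
        · exact not_dvd_of_lt (by omega) (by omega) (hp.dvd_of_dvd_pow h)
      · exact not_dvd_of_lt (by omega) (by omega) (hp.dvd_of_dvd_pow h)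
  obtain ⟨a, b, hb0, hbp, hab⟩ := Pint.add hp hPU hPV
  refine ⟨a, b, hb0, hbp, ?_⟩
  linear_combination (b:ℚ)*hA + (b:ℚ)*hB + (b:ℚ)*hG + (b:ℚ)*hW + (b:ℚ)*hW2 + (p:ℚ)^3*hab
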